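/- arXiv:1809.08446 — 2 statements merged into one kernel-verified Lean document; each statement's English description precedes it below -/
import Mathlib

section
/- For a nonnegative integer-valued flow f with conservation at all internal vertices in a finite directed acyclic graph, if the net outflow at s equals k > 0, then f can be decomposed into k s-t paths: there exist s-t paths p_1, ..., p_k such that f(e) equals the number of indices i and positions at which e occurs on p_i, for every edge e. -/
/-- A walk in a directed graph given by edge relation `E`. -/
def IsWalk {V : Type*} (E : V → V → Prop) (l : List V) : Prop :=
  l ≠ [] ∧ l.Chain' E

/-- An s-t walk. -/
def IsSTWalk {V : Type*} (E : V → V → Prop) (s t : V) (l : List V) : Prop :=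
  IsWalk E l ∧ l.head? = some s ∧ l.getLast? = some t

/-- The list of (directed) edges traversed by a walk, with multiplicity. -/
def walkEdges {V : Type*} (l : List V) : List (V × V) :=
  l.zip l.tail

section Aux

open Relation List

variable {V : Type*}

lemma walkEdges_cons₂ (a b : V) (r : List V) :
    walkEdges (a :: b :: r) = (a, b) :: walkEdges (b :: r) := rfl

lemma map_fst_walkEdges : ∀ (l : List V), (walkEdges l).map Prod.fst = l.dropLast
  | [] => rfl
  | [_] => rfl
  | a :: b :: r => by
      rw [walkEdges_cons₂, List.map_cons, map_fst_walkEdges (b :: r)]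
      rfl

lemma map_snd_walkEdges : ∀ (l : List V), (walkEdges l).map Prod.snd = l.tail
  | [] => rfl
  | [_] => rfl
  | a :: b :: r => by
      rw [walkEdges_cons₂, List.map_cons, map_snd_walkEdges (b :: r)]
      rfl

lemma chain_transGen {E : V → V → Prop} : ∀ {a : V} {rest : List V} {b : V},
    List.Chain E a rest → b ∈ rest → Relation.TransGen E a b := by
  intro a rest
  induction rest generalizing a with
  | nil => intro b _ hb; simp at hb
  | cons c r ih =>
    intro b hch hb
    replace hch : E a c ∧ Chain E c r := List.isChain_cons_cons.mp hch
    rcases List.mem_cons.mp hb with rfl | hb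
    · exact TransGen.single hch.1
    · exact TransGen.head hch.1 (ih hch.2 hb)

lemma nodup_of_chain' {E : V → V → Prop} (hacyc : ∀ v, ¬ Relation.TransGen E v v) :
    ∀ {l : List V}, l.Chain' E → l.Nodup := by
  intro l
  induction l with
  | nil => intro _; exact List.nodup_nil
  | cons a r ih =>
    intro hch
    have hch' : List.Chain E a r := hch
    refine List.nodup_cons.mpr ⟨?_, ih hch.tail⟩
    intro ha
    exact hacyc a (chain_transGen hch' ha)

lemma chain'_mem_walkEdges {R : V → V → Prop} : ∀ {l : List V}, l.Chain' R →
    ∀ e ∈ walkEdges l, R e.1 e.2 := by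
  intro l
  induction l with
  | nil => intro _ e he; simp [walkEdges] at he
  | cons a r ih =>
    intro hch e he
    match r with
    | [] => simp [walkEdges] at he
    | b :: r' =>
      rw [walkEdges_cons₂, List.mem_cons] at he
      rcases he with rfl | he
      · exact (List.isChain_cons_cons.mp hch).1
      · exact ih (List.isChain_cons_cons.mp hch).2 e he

lemma nodup_count_le_one [DecidableEq V] :
    ∀ {l : List (V × V)}, l.Nodup → ∀ a, l.count a ≤ 1 := by
  intro l
  induction l with
  | nil => intro _ a; simp
  | cons b l ih =>
    intro h a
    rw [List.count_cons]
    obtain ⟨hb, hl⟩ := List.nodup_cons.mp h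
    by_cases hab : b = a
    · subst hab
      rw [List.count_eq_zero_of_not_mem hb]
      simp
    · have := ih hl a
      simp [hab]
      omega

lemma sum_count_pair [Fintype V] [DecidableEq V] (es : List (V × V)) (v : V) :
    (∑ u, es.count (u, v)) = es.countP (fun e => e.2 = v) := by
  induction es with
  | nil => simp
  | cons e es ih =>
    rw [List.countP_cons]
    simp only [List.count_cons]
    rw [Finset.sum_add_distrib, ih]
    congr 1
    rcases e with ⟨a, b⟩
    by_cases hb : b = v
    · subst hb
      rw [if_pos (by simp)]
      rw [Finset.sum_eq_single a (fun u _ hu => by simp [Prod.ext_iff, Ne.symm hu])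
        (fun h => absurd (Finset.mem_univ a) h)]
      simp
    · rw [if_neg (by simp [hb])]
      exact Finset.sum_eq_zero fun u _ => by simp [Prod.ext_iff, hb]

lemma sum_count_fst [Fintype V] [DecidableEq V] (es : List (V × V)) (v : V) :
    (∑ u, es.count (v, u)) = es.countP (fun e => e.1 = v) := by
  induction es with
  | nil => simp
  | cons e es ih =>
    rw [List.countP_cons]
    simp only [List.count_cons]
    rw [Finset.sum_add_distrib, ih]
    congr 1
    rcases e with ⟨a, b⟩
    by_cases hb : a = v
    · subst hb
      rw [if_pos (by simp)]
      rw [Finset.sum_eq_single b (fun u _ hu => by simp [Prod.ext_iff, Ne.symm hu])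
        (fun h => absurd (Finset.mem_univ b) h)]
      simp
    · rw [if_neg (by simp [hb])]
      exact Finset.sum_eq_zero fun u _ => by simp [Prod.ext_iff, hb]

lemma countP_snd_walkEdges [DecidableEq V] (l : List V) (v : V) :
    (walkEdges l).countP (fun e => e.2 = v) = l.tail.count v := by
  rw [← map_snd_walkEdges l, List.count_eq_countP, List.countP_map]
  rfl

lemma countP_fst_walkEdges [DecidableEq V] (l : List V) (v : V) :
    (walkEdges l).countP (fun e => e.1 = v) = l.dropLast.count v := by
  rw [← map_fst_walkEdges l, List.count_eq_countP, List.countP_map]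
  rfl

end Aux

section Main

open Relation List

variable {V : Type*} [Fintype V] [DecidableEq V]
variable (E : V → V → Prop) (s t : V)

/-- If the value at `s` is zero, the flow is identically zero. -/
lemma zero_flow
    (hacyc : ∀ v, ¬ Relation.TransGen E v v)
    (ht : ∀ u, ¬ E t u)
    (f : V → V → ℕ)
    (hsupp : ∀ u v, ¬ E u v → f u v = 0)
    (hcons : ∀ v, v ≠ s → v ≠ t → (∑ u, f u v) = ∑ u, f v u)
    (hval : (∑ v, f s v) = 0) :
    ∀ u v, f u v = 0 := by
  have wf : WellFounded (fun a b : V => TransGen E a b) := by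
    have : IsIrrefl V (TransGen E) := ⟨hacyc⟩
    exact Finite.wellFounded_of_trans_of_irrefl _
  have key : ∀ v, (∑ u, f v u) = 0 := by
    intro v
    induction v using wf.induction with
    | _ v ih =>
      by_cases hvs : v = s
      · subst hvs; exact hval
      by_cases hvt : v = t
      · subst hvt
        exact Finset.sum_eq_zero fun u _ => hsupp _ _ (ht u)
      rw [← hcons v hvs hvt]
      apply Finset.sum_eq_zero
      intro u _
      by_cases he : E u v
      · have h1 : f u v ≤ ∑ w, f u w :=
          Finset.single_le_sum (fun w _ => Nat.zero_le _) (Finset.mem_univ v)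
        have h2 := ih u (TransGen.single he)
        omega
      · exact hsupp _ _ he
  intro u v
  have h1 : f u v ≤ ∑ w, f u w :=
    Finset.single_le_sum (fun w _ => Nat.zero_le _) (Finset.mem_univ v)
  have := key u
  omega

/-- From any vertex with positive outflow one can walk to `t` along positive edges. -/
lemma exists_path_to_sink
    (hacyc : ∀ v, ¬ Relation.TransGen E v v)
    (hs : ∀ u, ¬ E u s)
    (f : V → V → ℕ)
    (hsupp : ∀ u v, ¬ E u v → f u v = 0)
    (hcons : ∀ v, v ≠ s → v ≠ t → (∑ u, f u v) = ∑ u, f v u) :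
    ∀ v, (v = t ∨ 0 < ∑ u, f v u) →
      ∃ l : List V, l.head? = some v ∧ l.getLast? = some t ∧
        l.Chain' (fun a b => E a b ∧ 0 < f a b) := by
  have wf : WellFounded (fun a b : V => TransGen E b a) := by
    have : IsIrrefl V (TransGen (Function.swap E)) := by
      constructor
      intro v hv
      exact hacyc v (by simpa [Relation.transGen_swap] using hv)
    have h := Finite.wellFounded_of_trans_of_irrefl (TransGen (Function.swap E))
    apply Subrelation.wf (r := TransGen (Function.swap E)) _ h
    intro a b hab
    exact (Relation.transGen_swap).mpr hab
  intro v
  induction v using wf.induction with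
  | _ v ih =>
    intro hv
    rcases hv with rfl | hpos
    · exact ⟨[v], rfl, rfl, List.isChain_singleton v⟩
    · have : ∃ w, 0 < f v w := by
        by_contra h
        push_neg at h
        simp only [Nat.le_zero] at h
        rw [Finset.sum_eq_zero (fun w _ => h w)] at hpos
        exact absurd hpos (lt_irrefl 0)
      obtain ⟨w, hw⟩ := this
      have hE : E v w := by
        by_contra h
        rw [hsupp v w h] at hw
        exact absurd hw (lt_irrefl 0)
      have hwt : w = t ∨ 0 < ∑ u, f w u := by
        by_cases hwt : w = t
        · exact Or.inl hwt
        · right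
          have hws : w ≠ s := fun h => hs v (h ▸ hE)
          rw [← hcons w hws hwt]
          calc 0 < f v w := hw
            _ ≤ ∑ u, f u w :=
              Finset.single_le_sum (f := fun u => f u w) (fun u _ => Nat.zero_le _)
                (Finset.mem_univ v)
      obtain ⟨l, hh, hl, hch⟩ := ih w (TransGen.single hE) hwt
      refine ⟨v :: l, rfl, ?_, ?_⟩
      · rw [List.getLast?_cons, ← hl]
        cases l with
        | nil => simp at hh
        | cons a r => simp [List.getLast?_cons]
      · apply List.isChain_cons.mpr
        refine ⟨?_, hch⟩
        intro b hb
        rw [hh] at hb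
        cases hb
        exact ⟨hE, hw⟩

lemma flow_decomp_aux
    (hacyc : ∀ v, ¬ Relation.TransGen E v v)
    (hs : ∀ u, ¬ E u s) (ht : ∀ u, ¬ E t u) :
    ∀ (k : ℕ) (f : V → V → ℕ),
    (∀ u v, ¬ E u v → f u v = 0) →
    (∀ v, v ≠ s → v ≠ t → (∑ u, f u v) = ∑ u, f v u) →
    (∑ v, f s v) = k →
    ∃ p : Fin k → List V,
      (∀ i, IsSTWalk E s t (p i)) ∧
      (∀ u v, f u v = ∑ i, (walkEdges (p i)).count (u, v)) := by
  intro k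
  induction k with
  | zero =>
    intro f hsupp hcons hval
    refine ⟨Fin.elim0, fun i => i.elim0, ?_⟩
    intro u v
    rw [zero_flow E s t hacyc ht f hsupp hcons hval u v]
    simp
  | succ k ih =>
    intro f hsupp hcons hval
    -- extract a path
    have hst : s ≠ t := by
      intro h
      subst h
      rw [Finset.sum_eq_zero (fun v _ => hsupp s v (ht v))] at hval
      omega
    have hposs : 0 < ∑ u, f s u := by omega
    obtain ⟨l, hhead, hlast, hch⟩ :=
      exists_path_to_sink E s t hacyc hs f hsupp hcons s (Or.inr hposs)
    have hchE : l.Chain' E := hch.imp (fun a b h => h.1)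
    have hne : l ≠ [] := by intro h; rw [h] at hhead; simp at hhead
    have hnodup : l.Nodup := nodup_of_chain' hacyc hchE
    have hEdgePos : ∀ e ∈ walkEdges l, E e.1 e.2 ∧ 0 < f e.1 e.2 :=
      chain'_mem_walkEdges hch
    have hEdgesNodup : (walkEdges l).Nodup := by
      have h1 : l.dropLast.Nodup := hnodup.sublist (List.dropLast_sublist l)
      rw [← map_fst_walkEdges l] at h1
      exact h1.of_map _
    have hcount_le : ∀ u v, (walkEdges l).count (u, v) ≤ f u v := by
      intro u v
      by_cases hm : (u, v) ∈ walkEdges l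
      · have h1 : (walkEdges l).count (u, v) ≤ 1 := nodup_count_le_one hEdgesNodup (u, v)
        have h2 : 0 < f u v := (hEdgePos (u, v) hm).2
        omega
      · rw [List.count_eq_zero_of_not_mem hm]
        exact Nat.zero_le _
    -- the decomposed flow
    set f' : V → V → ℕ := fun u v => f u v - (walkEdges l).count (u, v) with hf'
    -- structure of l
    obtain ⟨r, rfl⟩ : ∃ r, l = s :: r := by
      cases l with
      | nil => exact absurd rfl hne
      | cons a r =>
        have ha : a = s := by simpa using hhead
        exact ⟨r, by rw [ha]⟩
    set l := s :: r with hl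
    have hlastmem : t ∈ l := by
      have := List.getLast?_eq_getLast hne ▸ hlast
      rw [Option.some_inj] at this
      rw [← this]
      exact List.getLast_mem hne
    have hdrop : l.dropLast ++ [t] = l := by
      have h := List.dropLast_append_getLast hne
      rwa [show l.getLast hne = t by
        have := List.getLast?_eq_getLast hne ▸ hlast
        exact Option.some_inj.mp this] at h
    -- counts in tail and dropLast
    have htail_count : ∀ v, v ≠ s → l.tail.count v = l.count v := by
      intro v hv
      rw [hl]
      simp [List.count_cons, Ne.symm hv]
    have hdrop_count : ∀ v, v ≠ t → l.dropLast.count v = l.count v := by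
      intro v hv
      conv_rhs => rw [← hdrop]
      rw [List.count_append]
      simp [List.count_singleton, hv, Ne.symm hv]
    have hdrop_count_s : l.dropLast.count s = 1 := by
      rw [hdrop_count s hst, hl, List.count_cons_self,
        List.count_eq_zero_of_not_mem (by
          have := List.nodup_cons.mp (hl ▸ hnodup)
          exact this.1)]
    -- sums of counts
    have hsum_in : ∀ v, (∑ u, (walkEdges l).count (u, v)) = l.tail.count v := by
      intro v
      rw [sum_count_pair, countP_snd_walkEdges]
    have hsum_out : ∀ v, (∑ u, (walkEdges l).count (v, u)) = l.dropLast.count v := by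
      intro v
      rw [sum_count_fst, countP_fst_walkEdges]
    have hsub_in : ∀ v, (∑ u, f' u v) = (∑ u, f u v) - l.tail.count v := by
      intro v
      rw [← hsum_in v, hf']
      exact Finset.sum_tsub_distrib Finset.univ (fun u _ => hcount_le u v)
    have hsub_out : ∀ v, (∑ u, f' v u) = (∑ u, f v u) - l.dropLast.count v := by
      intro v
      rw [← hsum_out v, hf']
      exact Finset.sum_tsub_distrib Finset.univ (fun u _ => hcount_le v u)
    have hcount_le_sum_in : ∀ v, l.tail.count v ≤ ∑ u, f u v := by
      intro v
      rw [← hsum_in v]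
      exact Finset.sum_le_sum (fun u _ => hcount_le u v)
    -- new hypotheses
    have hsupp' : ∀ u v, ¬ E u v → f' u v = 0 := by
      intro u v h
      have := hsupp u v h
      have := hcount_le u v
      simp only [hf']
      omega
    have hcons' : ∀ v, v ≠ s → v ≠ t → (∑ u, f' u v) = ∑ u, f' v u := by
      intro v hvs hvt
      rw [hsub_in, hsub_out, htail_count v hvs, hdrop_count v hvt, hcons v hvs hvt]
    have hval' : (∑ v, f' s v) = k := by
      rw [hsub_out, hdrop_count_s, hval]
      omega
    obtain ⟨p', hp'walk, hp'count⟩ := ih f' hsupp' hcons' hval'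
    refine ⟨Fin.cons l p', ?_, ?_⟩
    · intro i
      induction i using Fin.cases with
      | zero =>
        refine ⟨⟨hne, hchE⟩, hhead, hlast⟩
      | succ j =>
        rw [Fin.cons_succ]
        exact hp'walk j
    · intro u v
      rw [Fin.sum_univ_succ]
      simp only [Fin.cons_zero, Fin.cons_succ]
      rw [← hp'count u v]
      have := hcount_le u v
      simp only [hf']
      omega

end Main

/-- In a finite DAG with source `s` (in-degree 0) and sink `t`
(out-degree 0), a nonnegative integer flow `f` supported on the edges, with
conservation at every internal vertex and value `k > 0` at `s`, decomposes into
`k` s-t paths: `f e` equals the total number of occurrences of `e` on the paths,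
for every edge `e`. -/
theorem flow_decomposition {V : Type*} [Fintype V] [DecidableEq V]
    (E : V → V → Prop) (s t : V)
    (hacyc : ∀ v, ¬ Relation.TransGen E v v)
    (hs : ∀ u, ¬ E u s) (ht : ∀ u, ¬ E t u)
    (f : V → V → ℕ)
    (hsupp : ∀ u v, ¬ E u v → f u v = 0)
    (hcons : ∀ v, v ≠ s → v ≠ t → (∑ u, f u v) = ∑ u, f v u)
    (k : ℕ) (hk : 0 < k)
    (hval : (∑ v, f s v) = k) :
    ∃ p : Fin k → List V,
      (∀ i, IsSTWalk E s t (p i)) ∧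
      (∀ u v, f u v = ∑ i, (walkEdges (p i)).count (u, v)) := by
  exact flow_decomp_aux E s t hacyc hs ht k f hsupp hcons hval
end

section
/- In a finite directed acyclic graph, the maximum size of an antichain with respect to reachability (a set of vertices pairwise unreachable from one another) equals the minimum number of paths needed so that every vertex lies on at least one path, provided every vertex lies on some s-t path and we count s-t paths (Dilworth-type duality via reachability order). -/
section Dilworth

variable {α : Type*} [DecidableEq α] {r : α → α → Prop}

def ChainF (r : α → α → Prop) (C : Finset α) : Prop := ∀ a ∈ C, ∀ b ∈ C, r a b ∨ r b a
def AntichainF (r : α → α → Prop) (A : Finset α) : Prop := ∀ a ∈ A, ∀ b ∈ A, a ≠ b → ¬ r a b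

lemma chain_inter_antichain
    {C A : Finset α} (hC : ChainF r C) (hA : AntichainF r A) : (C ∩ A).card ≤ 1 := by
  rw [Finset.card_le_one]
  intro a ha b hb
  simp only [Finset.mem_inter] at ha hb
  by_contra hne
  rcases hC a ha.1 b hb.1 with h | h
  · exact hA a ha.2 b hb.2 hne h
  · exact hA b hb.2 a ha.2 (Ne.symm hne) h

lemma antichain_card_le_of_cover
    {k : ℕ} {C : Fin k → Finset α} (hC : ∀ i, ChainF r (C i))
    {A : Finset α} (hA : AntichainF r A) (hcov : ∀ x ∈ A, ∃ i, x ∈ C i) :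
    A.card ≤ k := by
  have hsub : A ⊆ Finset.univ.biUnion (fun i => C i ∩ A) := by
    intro x hx
    rcases hcov x hx with ⟨i, hi⟩
    exact Finset.mem_biUnion.2 ⟨i, Finset.mem_univ i, Finset.mem_inter.2 ⟨hi, hx⟩⟩
  calc A.card ≤ (Finset.univ.biUnion (fun i => C i ∩ A)).card := Finset.card_le_card hsub
    _ ≤ ∑ i : Fin k, (C i ∩ A).card := Finset.card_biUnion_le
    _ ≤ ∑ _i : Fin k, 1 := Finset.sum_le_sum (fun i _ => chain_inter_antichain (hC i) hA)
    _ = k := by simp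

lemma exists_max_of_chain (hrefl : ∀ a, r a a) (htrans : ∀ a b c, r a b → r b c → r a c)
    {C : Finset α} (hne : C.Nonempty) (hC : ChainF r C) :
    ∃ m ∈ C, ∀ x ∈ C, r x m := by
  classical
  induction C using Finset.induction_on with
  | empty => exact absurd hne (by simp)
  | @insert a C haC ih =>
    rcases Finset.eq_empty_or_nonempty C with rfl | hCne
    · exact ⟨a, by simp, by simp [hrefl]⟩
    · have hCchain : ChainF r C := fun x hx y hy => hC x (by simp [hx]) y (by simp [hy])
      rcases ih hCne hCchain with ⟨m, hmC, hmax⟩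
      rcases hC a (by simp) m (by simp [hmC]) with h | h
      · exact ⟨m, by simp [hmC], fun x hx => by
          rcases Finset.mem_insert.1 hx with rfl | hx
          · exact h
          · exact hmax x hx⟩
      · exact ⟨a, by simp, fun x hx => by
          rcases Finset.mem_insert.1 hx with rfl | hx
          · exact hrefl x
          · exact htrans x m a (hmax x hx) h⟩

lemma exists_min_of_chain (hrefl : ∀ a, r a a) (htrans : ∀ a b c, r a b → r b c → r a c)
    {C : Finset α} (hne : C.Nonempty) (hC : ChainF r C) :
    ∃ m ∈ C, ∀ x ∈ C, r m x := by
  have := exists_max_of_chain (r := fun a b => r b a) hrefl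
    (fun a b c hab hbc => htrans c b a hbc hab) hne (fun a ha b hb => (hC a ha b hb).symm)
  exact this

lemma exists_maximal_rel (htrans : ∀ a b c, r a b → r b c → r a c)
    (hanti : ∀ a b, r a b → r b a → a = b)
    {S : Finset α} (hne : S.Nonempty) :
    ∃ a ∈ S, ∀ b ∈ S, r a b → b = a := by
  classical
  induction S using Finset.induction_on with
  | empty => exact absurd hne (by simp)
  | @insert c S hcS ih =>
    rcases Finset.eq_empty_or_nonempty S with rfl | hSne
    · exact ⟨c, by simp, fun b hb _ => by simpa using hb⟩
    · rcases ih hSne with ⟨a, haS, hmax⟩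
      by_cases hac : r a c ∧ c ≠ a
      · refine ⟨c, by simp, fun b hb hcb => ?_⟩
        rcases Finset.mem_insert.1 hb with rfl | hb
        · rfl
        · have hba : b = a := hmax b hb (htrans a c b hac.1 hcb)
          exact absurd (hanti a c hac.1 (hba ▸ hcb)) (fun h => hac.2 h.symm)
      · refine ⟨a, by simp [haS], fun b hb hab => ?_⟩
        rcases Finset.mem_insert.1 hb with rfl | hb
        · by_contra hba
          exact hac ⟨hab, hba⟩
        · exact hmax b hb hab

lemma chain_toList (hrefl : ∀ a, r a a) (htrans : ∀ a b c, r a b → r b c → r a c)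
    {C : Finset α} (hC : ChainF r C) :
    ∃ L : List α, L.Chain' r ∧ ∀ x, x ∈ L ↔ x ∈ C := by
  classical
  induction C using Finset.strongInductionOn with
  | _ C ih =>
    rcases Finset.eq_empty_or_nonempty C with rfl | hne
    · exact ⟨[], List.isChain_nil, by simp⟩
    · rcases exists_min_of_chain hrefl htrans hne hC with ⟨m, hmC, hmin⟩
      have hsub : C.erase m ⊂ C := Finset.erase_ssubset hmC
      have hchain' : ChainF r (C.erase m) := fun a ha b hb =>
        hC a (Finset.mem_of_mem_erase ha) b (Finset.mem_of_mem_erase hb)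
      rcases ih _ hsub hchain' with ⟨L, hLchain, hLmem⟩
      refine ⟨m :: L, ?_, ?_⟩
      · refine List.isChain_cons.2 ?_
        refine ⟨fun y hy => ?_, hLchain⟩
        have : y ∈ L := by
          cases L with
          | nil => simp at hy
          | cons z L' => simp_all
        exact hmin y (Finset.mem_of_mem_erase ((hLmem y).1 this))
      · intro x
        simp only [List.mem_cons, hLmem, Finset.mem_erase]
        constructor
        · rintro (rfl | ⟨_, h⟩)
          · exact hmC
          · exact h
        · intro hx
          by_cases hxm : x = m
          · exact Or.inl hxm
          · exact Or.inr ⟨hxm, hx⟩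


theorem dilworth (hrefl : ∀ a, r a a) (htrans : ∀ a b c, r a b → r b c → r a c)
    (hanti : ∀ a b, r a b → r b a → a = b) :
    ∀ S : Finset α, ∃ (k : ℕ) (C : Fin k → Finset α),
      (∀ i, C i ⊆ S) ∧ (∀ i, ChainF r (C i)) ∧
      (∀ i j, i ≠ j → Disjoint (C i) (C j)) ∧
      (∀ x ∈ S, ∃ i, x ∈ C i) ∧
      ∃ A : Finset α, A ⊆ S ∧ AntichainF r A ∧ A.card = k := by
  classical
  intro S
  induction S using Finset.strongInductionOn with
  | _ S ih =>
  rcases Finset.eq_empty_or_nonempty S with rfl | hne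
  · exact ⟨0, Fin.elim0, fun i => i.elim0, fun i => i.elim0, fun i => i.elim0,
      by simp, ∅, by simp, by simp [AntichainF], by simp⟩
  obtain ⟨a, haS, hamax⟩ := exists_maximal_rel htrans hanti hne
  set S' := S.erase a with hS'
  have hS'S : S' ⊆ S := Finset.erase_subset _ _
  have hss : S' ⊂ S := Finset.erase_ssubset haS
  obtain ⟨k, C, hCsub, hCchain, hCdisj, hCcov, A0, hA0sub, hA0anti, hA0card⟩ := ih S' hss
  -- every maximum antichain of S' meets every chain
  have meets : ∀ B : Finset α, B ⊆ S' → AntichainF r B → B.card = k →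
      ∀ i, ∃ x, x ∈ B ∧ x ∈ C i := by
    intro B hBsub hBanti hBcard i
    by_contra h
    push_neg at h
    have h0 : (C i ∩ B).card = 0 := by
      rw [Finset.card_eq_zero, Finset.eq_empty_iff_forall_notMem]
      intro x hx
      simp only [Finset.mem_inter] at hx
      exact h x hx.2 hx.1
    have h1 : B ⊆ Finset.univ.biUnion (fun j => C j ∩ B) := by
      intro x hx
      rcases hCcov x (hBsub hx) with ⟨j, hj⟩
      exact Finset.mem_biUnion.2 ⟨j, Finset.mem_univ j, Finset.mem_inter.2 ⟨hj, hx⟩⟩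
    have h2 : k ≤ ∑ j : Fin k, (C j ∩ B).card := by
      calc k = B.card := hBcard.symm
        _ ≤ _ := Finset.card_le_card h1
        _ ≤ _ := Finset.card_biUnion_le
    have h3 : ∑ j : Fin k, (C j ∩ B).card
        = ∑ j ∈ Finset.univ.erase i, (C j ∩ B).card :=
      (Finset.sum_erase (f := fun j => (C j ∩ B).card) Finset.univ h0).symm
    have h4 : ∑ j ∈ Finset.univ.erase i, (C j ∩ B).card ≤ (Finset.univ.erase i).card * 1 :=
      Finset.sum_le_card_nsmul _ _ 1 (fun x _ => chain_inter_antichain (hCchain x) hBanti)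
    have h5 : (Finset.univ.erase i : Finset (Fin k)).card = k - 1 := by
      rw [Finset.card_erase_of_mem (Finset.mem_univ i)]
      simp
    have hkpos : 0 < k := Fin.pos i
    omega
  -- set of elements of C i lying in some maximum antichain of S'
  set T : Fin k → Finset α := fun i =>
    (C i).filter (fun x => ∃ B, B ⊆ S' ∧ AntichainF r B ∧ B.card = k ∧ x ∈ B) with hT
  have hTne : ∀ i, (T i).Nonempty := by
    intro i
    obtain ⟨x, hxA0, hxCi⟩ := meets A0 hA0sub hA0anti hA0card i
    exact ⟨x, Finset.mem_filter.2 ⟨hxCi, A0, hA0sub, hA0anti, hA0card, hxA0⟩⟩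
  have hTchain : ∀ i, ChainF r (T i) := fun i x hx y hy =>
    hCchain i x (Finset.mem_of_mem_filter _ hx) y (Finset.mem_of_mem_filter _ hy)
  have hmaxT : ∀ i, ∃ mm ∈ T i, ∀ x ∈ T i, r x mm := fun i =>
    exists_max_of_chain hrefl htrans (hTne i) (hTchain i)
  choose m hmT hmmax using hmaxT
  have hmC : ∀ i, m i ∈ C i := fun i => Finset.mem_of_mem_filter _ (hmT i)
  have hmS' : ∀ i, m i ∈ S' := fun i => hCsub i (hmC i)
  have hminj : Function.Injective m := by
    intro i j hij
    by_contra hne'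
    exact Finset.disjoint_left.1 (hCdisj i j hne') (hmC i) (hij ▸ hmC j)
  set A : Finset α := Finset.univ.image m with hA
  have hAcard : A.card = k := by
    rw [hA, Finset.card_image_of_injective _ hminj, Finset.card_univ, Fintype.card_fin]
  have hAsub : A ⊆ S' := by
    intro x hx
    obtain ⟨i, _, rfl⟩ := Finset.mem_image.1 hx
    exact hmS' i
  have hAanti : AntichainF r A := by
    intro x hx y hy hxy hr
    obtain ⟨i, _, rfl⟩ := Finset.mem_image.1 hx
    obtain ⟨j, _, rfl⟩ := Finset.mem_image.1 hy
    have hij : i ≠ j := fun h => hxy (by rw [h])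
    obtain ⟨hCj, B, hBsub, hBanti, hBcard, hmB⟩ := Finset.mem_filter.1 (hmT j)
    obtain ⟨x, hxB, hxCi⟩ := meets B hBsub hBanti hBcard i
    have hxTi : x ∈ T i := Finset.mem_filter.2 ⟨hxCi, B, hBsub, hBanti, hBcard, hxB⟩
    have hxmj : r x (m j) := htrans _ _ _ (hmmax i x hxTi) hr
    have hxne : x ≠ m j := by
      rintro rfl
      exact Finset.disjoint_left.1 (hCdisj i j hij) hxCi hCj
    exact hBanti x hxB (m j) hmB hxne hxmj
  have hmna : ∀ i, m i ≠ a := fun i => Finset.ne_of_mem_erase (hmS' i)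
  have hnam : ∀ i, ¬ r a (m i) := fun i hr => hmna i (hamax (m i) (hS'S (hmS' i)) hr)
  by_cases hcase : ∃ i, r (m i) a
  · -- case: a is above some mᵢ
    obtain ⟨i, hi⟩ := hcase
    set K : Finset α := insert a ((C i).filter (fun x => r x (m i))) with hK
    have hKsub : K ⊆ S := by
      intro x hx
      rcases Finset.mem_insert.1 hx with rfl | hx
      · exact haS
      · exact hS'S (hCsub i (Finset.mem_of_mem_filter _ hx))
    have hKchain : ChainF r K := by
      intro x hx y hy
      rcases Finset.mem_insert.1 hx with hxa | hxf
      · rcases Finset.mem_insert.1 hy with hya | hyf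
        · rw [hxa, hya]; exact Or.inl (hrefl a)
        · rw [hxa]
          exact Or.inr (htrans y (m i) a (Finset.mem_filter.1 hyf).2 hi)
      · rcases Finset.mem_insert.1 hy with hya | hyf
        · rw [hya]
          exact Or.inl (htrans x (m i) a (Finset.mem_filter.1 hxf).2 hi)
        · exact hCchain i x (Finset.mem_of_mem_filter _ hxf) y (Finset.mem_of_mem_filter _ hyf)
    have haK : a ∈ K := Finset.mem_insert_self _ _
    set S₂ := S \ K with hS₂
    have hS₂ss : S₂ ⊂ S :=
      (Finset.ssubset_iff_of_subset Finset.sdiff_subset).2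
        ⟨a, haS, by simp [hS₂, haK]⟩
    obtain ⟨k₂, C₂, hC₂sub, hC₂chain, hC₂disj, hC₂cov, A₂, hA₂sub, hA₂anti, hA₂card⟩ :=
      ih S₂ hS₂ss
    have hS₂S' : S₂ ⊆ S' := by
      intro x hx
      obtain ⟨hxS, hxK⟩ := Finset.mem_sdiff.1 hx
      exact Finset.mem_erase.2 ⟨fun h => hxK (h ▸ haK), hxS⟩
    have hk₂lt : k₂ < k := by
      have hle : A₂.card ≤ k := antichain_card_le_of_cover hCchain hA₂anti
        (fun x hx => hCcov x (hS₂S' (hA₂sub hx)))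
      rcases eq_or_lt_of_le (hA₂card ▸ hle : k₂ ≤ k) with heq | hlt
      · exfalso
        have hsub' : A₂ ⊆ S' := hA₂sub.trans hS₂S'
        have hcard' : A₂.card = k := hA₂card.trans heq
        obtain ⟨x, hxA₂, hxCi⟩ := meets A₂ hsub' hA₂anti hcard' i
        have hxT : x ∈ T i :=
          Finset.mem_filter.2 ⟨hxCi, A₂, hsub', hA₂anti, hcard', hxA₂⟩
        have hxK : x ∈ K :=
          Finset.mem_insert.2 (Or.inr (Finset.mem_filter.2 ⟨hxCi, hmmax i x hxT⟩))
        exact (Finset.mem_sdiff.1 (hA₂sub hxA₂)).2 hxK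
      · exact hlt
    have hKdisj : ∀ p, Disjoint K (C₂ p) := fun p =>
      Finset.disjoint_left.2 (fun {x} hx hx₂ => (Finset.mem_sdiff.1 (hC₂sub p hx₂)).2 hx)
    have hchains : ∀ j : Fin (k₂ + 1), ChainF r ((Fin.cons K C₂ : Fin (k₂ + 1) → Finset α) j) := by
      intro j
      rcases Fin.eq_zero_or_eq_succ j with rfl | ⟨p, rfl⟩
      · simpa using hKchain
      · simpa using hC₂chain p
    have hsubs : ∀ j : Fin (k₂ + 1), (Fin.cons K C₂ : Fin (k₂ + 1) → Finset α) j ⊆ S := by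
      intro j
      rcases Fin.eq_zero_or_eq_succ j with rfl | ⟨p, rfl⟩
      · simpa using hKsub
      · simpa using (hC₂sub p).trans Finset.sdiff_subset
    have hcov : ∀ x ∈ S, ∃ j, x ∈ (Fin.cons K C₂ : Fin (k₂ + 1) → Finset α) j := by
      intro x hxS
      by_cases hxK : x ∈ K
      · exact ⟨0, by simpa using hxK⟩
      · obtain ⟨p, hp⟩ := hC₂cov x (Finset.mem_sdiff.2 ⟨hxS, hxK⟩)
        exact ⟨p.succ, by simpa using hp⟩
    have hdisj : ∀ j j' : Fin (k₂ + 1), j ≠ j' →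
        Disjoint ((Fin.cons K C₂ : Fin (k₂ + 1) → Finset α) j) ((Fin.cons K C₂ : Fin (k₂ + 1) → Finset α) j') := by
      intro j j' hjj'
      rcases Fin.eq_zero_or_eq_succ j with rfl | ⟨p, rfl⟩
      · rcases Fin.eq_zero_or_eq_succ j' with rfl | ⟨q, rfl⟩
        · exact absurd rfl hjj'
        · simpa using hKdisj q
      · rcases Fin.eq_zero_or_eq_succ j' with rfl | ⟨q, rfl⟩
        · simpa using (hKdisj p).symm
        · have hpq : p ≠ q := fun h => hjj' (by rw [h])
          simpa using hC₂disj p q hpq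
    have hkeq : k = k₂ + 1 := by
      have hle : k ≤ k₂ + 1 := hAcard ▸ antichain_card_le_of_cover hchains hAanti
        (fun x hx => hcov x (hS'S (hAsub hx)))
      omega
    refine ⟨k₂ + 1, (Fin.cons K C₂ : Fin (k₂ + 1) → Finset α), hsubs, hchains, hdisj, hcov,
      A, hAsub.trans hS'S, hAanti, ?_⟩
    rw [hAcard, hkeq]
  · -- case: a is incomparable with all mᵢ
    push_neg at hcase
    have hanotA : a ∉ A := by
      intro h
      obtain ⟨i, _, hi⟩ := Finset.mem_image.1 h
      exact hmna i hi
    have hchains : ∀ j : Fin (k + 1), ChainF r ((Fin.cons {a} C : Fin (k + 1) → Finset α) j) := by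
      intro j
      rcases Fin.eq_zero_or_eq_succ j with rfl | ⟨p, rfl⟩
      · intro x hx y hy
        simp only [Fin.cons_zero, Finset.mem_singleton] at hx hy
        subst hx; subst hy
        exact Or.inl (hrefl _)
      · simpa using hCchain p
    have hsubs : ∀ j : Fin (k + 1), (Fin.cons {a} C : Fin (k + 1) → Finset α) j ⊆ S := by
      intro j
      rcases Fin.eq_zero_or_eq_succ j with rfl | ⟨p, rfl⟩
      · simpa using haS
      · simpa using (hCsub p).trans hS'S
    have hcov : ∀ x ∈ S, ∃ j, x ∈ (Fin.cons {a} C : Fin (k + 1) → Finset α) j := by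
      intro x hxS
      by_cases hxa : x = a
      · exact ⟨0, by simp [hxa]⟩
      · obtain ⟨p, hp⟩ := hCcov x (Finset.mem_erase.2 ⟨hxa, hxS⟩)
        exact ⟨p.succ, by simpa using hp⟩
    have hadisj : ∀ p, Disjoint ({a} : Finset α) (C p) := fun p =>
      Finset.disjoint_singleton_left.2
        (fun h => Finset.notMem_erase a S (hCsub p h))
    have hdisj : ∀ j j' : Fin (k + 1), j ≠ j' →
        Disjoint ((Fin.cons {a} C : Fin (k + 1) → Finset α) j) ((Fin.cons {a} C : Fin (k + 1) → Finset α) j') := by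
      intro j j' hjj'
      rcases Fin.eq_zero_or_eq_succ j with rfl | ⟨p, rfl⟩
      · rcases Fin.eq_zero_or_eq_succ j' with rfl | ⟨q, rfl⟩
        · exact absurd rfl hjj'
        · simpa using hadisj q
      · rcases Fin.eq_zero_or_eq_succ j' with rfl | ⟨q, rfl⟩
        · simpa using (hadisj p).symm
        · have hpq : p ≠ q := fun h => hjj' (by rw [h])
          simpa using hCdisj p q hpq
    refine ⟨k + 1, (Fin.cons {a} C : Fin (k + 1) → Finset α), hsubs, hchains, hdisj, hcov,
      insert a A, ?_, ?_, ?_⟩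
    · intro x hx
      rcases Finset.mem_insert.1 hx with rfl | hx
      · exact haS
      · exact hS'S (hAsub hx)
    · intro x hx y hy hxy hr
      rcases Finset.mem_insert.1 hx with hxa | hx'
      · rcases Finset.mem_insert.1 hy with hya | hy'
        · exact hxy (hxa.trans hya.symm)
        · obtain ⟨j, _, hj⟩ := Finset.mem_image.1 hy'
          rw [hxa, ← hj] at hr
          exact hnam j hr
      · rcases Finset.mem_insert.1 hy with hya | hy'
        · obtain ⟨j, _, hj⟩ := Finset.mem_image.1 hx'
          rw [hya, ← hj] at hr
          exact hcase j hr
        · exact hAanti x hx' y hy' hxy hr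
    · rw [Finset.card_insert_of_notMem hanotA, hAcard]

end Dilworth

section Walks

variable {V : Type*} {E : V → V → Prop}

lemma chain'_reach_of_head : ∀ (l : List V), l.Chain' E → ∀ a b, l.head? = some a → b ∈ l →
    Relation.ReflTransGen E a b := by
  intro l
  induction l with
  | nil => simp
  | cons x l' ihl =>
    intro hch a b ha hb
    simp only [List.head?_cons, Option.some.injEq] at ha
    subst ha
    rcases List.mem_cons.1 hb with hbx | hb
    · rw [hbx]
    · cases l' with
      | nil => simp at hb
      | cons y l'' =>
        have hch' := List.isChain_cons_cons.1 hch
        exact Relation.ReflTransGen.head hch'.1 (ihl hch'.2 y b rfl hb)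

lemma chain'_reach_last : ∀ (l : List V), l.Chain' E → ∀ c b, l.getLast? = some c → b ∈ l →
    Relation.ReflTransGen E b c := by
  intro l
  induction l with
  | nil => simp
  | cons x l' ihl =>
    intro hch c b hc hb
    cases l' with
    | nil =>
      simp only [List.getLast?_singleton, Option.some.injEq] at hc
      rcases List.mem_singleton.1 hb with rfl
      rw [hc]
    | cons y l'' =>
      have hch' := List.isChain_cons_cons.1 hch
      rw [List.getLast?_cons_cons] at hc
      rcases List.mem_cons.1 hb with hbx | hb
      · rw [hbx]
        exact Relation.ReflTransGen.head hch'.1 (ihl hch'.2 c y hc (by simp))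
      · exact ihl hch'.2 c b hc hb

lemma chain'_comparable : ∀ (l : List V), l.Chain' E → ∀ a b, a ∈ l → b ∈ l →
    Relation.ReflTransGen E a b ∨ Relation.ReflTransGen E b a := by
  intro l
  induction l with
  | nil => simp
  | cons x l' ihl =>
    intro hch a b ha hb
    rcases List.mem_cons.1 ha with hax | ha
    · exact Or.inl (hax ▸ chain'_reach_of_head (x :: l') hch x b rfl hb)
    · rcases List.mem_cons.1 hb with hbx | hb
      · exact Or.inr (hbx ▸ chain'_reach_of_head (x :: l') hch x a rfl (List.mem_cons.2 (Or.inr ha)))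
      · exact ihl hch.tail a b ha hb

lemma rtg_to_walk {a b : V} (h : Relation.ReflTransGen E a b) :
    ∃ l : List V, l.Chain' E ∧ l.head? = some a ∧ l.getLast? = some b := by
  induction h using Relation.ReflTransGen.head_induction_on with
  | refl => exact ⟨[b], List.isChain_singleton _, rfl, rfl⟩
  | head hac _ ih =>
    obtain ⟨l, hch, hhd, hlast⟩ := ih
    cases l with
    | nil => simp at hhd
    | cons c' l' =>
      simp only [List.head?_cons, Option.some.injEq] at hhd
      subst hhd
      exact ⟨_ :: _ :: l', List.isChain_cons_cons.2 ⟨hac, hch⟩, rfl,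
        by rw [List.getLast?_cons_cons]; exact hlast⟩

lemma walk_join {l1 l2 : List V} (h1 : l1.Chain' E) (h2 : l2.Chain' E) {x : V}
    (hl1 : l1.getLast? = some x) (hl2 : l2.head? = some x) :
    ∃ l : List V, l.Chain' E ∧ l.head? = l1.head? ∧ l.getLast? = l2.getLast? ∧
      (∀ y ∈ l1, y ∈ l) ∧ (∀ y ∈ l2, y ∈ l) := by
  cases l2 with
  | nil => simp at hl2
  | cons x' l2' =>
    simp only [List.head?_cons, Option.some.injEq] at hl2
    subst hl2
    refine ⟨l1 ++ l2', ?_, ?_, ?_, ?_, ?_⟩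
    · refine List.isChain_append.2 ⟨h1, h2.tail, ?_⟩
      intro u hu v hv
      rw [hl1] at hu
      simp only [Option.mem_def, Option.some.injEq] at hu
      subst hu
      exact (List.isChain_cons.1 h2).1 v hv
    · cases l1 with
      | nil => simp at hl1
      | cons w l1' => rfl
    · cases l2' with
      | nil =>
        simp only [List.append_nil, List.getLast?_singleton]
        exact hl1
      | cons z l2'' =>
        rw [List.getLast?_cons_cons, List.getLast?_append]
        obtain ⟨w, hw⟩ : ∃ w, (z :: l2'').getLast? = some w :=
          ⟨_, List.getLast?_eq_getLast (by simp)⟩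
        rw [hw]
        rfl
    · intro y hy; exact List.mem_append.2 (Or.inl hy)
    · intro y hy
      rcases List.mem_cons.1 hy with hyx | hy
      · exact hyx ▸ List.mem_append.2 (Or.inl (List.mem_of_getLast? hl1))
      · exact List.mem_append.2 (Or.inr hy)

lemma chainRTG_to_walk : ∀ (L : List V), L ≠ [] → L.Chain' (Relation.ReflTransGen E) →
    ∃ l : List V, l.Chain' E ∧ l.head? = L.head? ∧ l.getLast? = L.getLast? ∧
      ∀ x ∈ L, x ∈ l := by
  intro L
  induction L with
  | nil => simp
  | cons a L' ihL =>
    intro _ hch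
    cases L' with
    | nil => exact ⟨[a], List.isChain_singleton _, rfl, rfl, by simp⟩
    | cons b L'' =>
      have hch' := List.isChain_cons_cons.1 hch
      obtain ⟨l2, h2ch, h2hd, h2last, h2mem⟩ := ihL (by simp) hch'.2
      obtain ⟨l1, h1ch, h1hd, h1last⟩ := rtg_to_walk hch'.1
      obtain ⟨l, hch'', hhd, hlast, hm1, hm2⟩ :=
        walk_join h1ch h2ch h1last (by rw [h2hd]; rfl)
      refine ⟨l, hch'', by rw [hhd, h1hd]; rfl, by rw [hlast, h2last, List.getLast?_cons_cons], ?_⟩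
      intro x hx
      rcases List.mem_cons.1 hx with hxa | hx
      · exact hxa ▸ hm1 a (List.mem_of_mem_head? (by rw [h1hd]; rfl))
      · exact hm2 x (h2mem x hx)

end Walks

/-- Dilworth-type duality. In a finite DAG with source `s` and
sink `t` in which every vertex lies on some s-t path, the maximum size of an
incomparable vertex set (pairwise unreachable vertices) equals the minimum
number of s-t paths needed so that every vertex lies on at least one path. -/
theorem max_antichain_eq_min_path_cover {V : Type*} [Fintype V]
    (E : V → V → Prop) (s t : V)
    (hacyc : ∀ v, ¬ Relation.TransGen E v v)
    (hs : ∀ u, ¬ E u s) (ht : ∀ u, ¬ E t u)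
    (hall : ∀ v : V, ∃ p : List V, IsSTWalk E s t p ∧ v ∈ p) :
    sSup {n : ℕ | ∃ I : Finset V, I.card = n ∧
        ∀ u ∈ I, ∀ v ∈ I, u ≠ v → ¬ Relation.ReflTransGen E u v}
      = sInf {n : ℕ | ∃ p : Fin n → List V,
        (∀ i, IsSTWalk E s t (p i)) ∧ (∀ v : V, ∃ i, v ∈ p i)} := by
  classical
  have hrefl : ∀ a : V, Relation.ReflTransGen E a a := fun a => .refl
  have htrans : ∀ a b c : V, Relation.ReflTransGen E a b → Relation.ReflTransGen E b c →
      Relation.ReflTransGen E a c := fun a b c h1 h2 => h1.trans h2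
  have hanti : ∀ a b : V, Relation.ReflTransGen E a b → Relation.ReflTransGen E b a → a = b := by
    intro a b h1 h2
    rcases Relation.reflTransGen_iff_eq_or_transGen.1 h1 with heq | htg
    · exact heq.symm
    · exact absurd (Relation.TransGen.trans_right h2 htg) (hacyc b)
  have hreach_s : ∀ v : V, Relation.ReflTransGen E s v := by
    intro v
    obtain ⟨p, ⟨⟨hpne, hpch⟩, hph, hpl⟩, hvp⟩ := hall v
    exact chain'_reach_of_head p hpch s v hph hvp
  have hreach_t : ∀ v : V, Relation.ReflTransGen E v t := by
    intro v
    obtain ⟨p, ⟨⟨hpne, hpch⟩, hph, hpl⟩, hvp⟩ := hall v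
    exact chain'_reach_last p hpch t v hpl hvp
  obtain ⟨k, C, hCsub, hCchain, hCdisj, hCcov, A, hAsub, hAanti, hAcard⟩ :=
    dilworth (r := Relation.ReflTransGen E) hrefl htrans hanti Finset.univ
  -- build an s-t walk through each chain
  have hpath : ∀ i : Fin k, ∃ l : List V, IsSTWalk E s t l ∧ ∀ x ∈ C i, x ∈ l := by
    intro i
    obtain ⟨L, hLch, hLmem⟩ := chain_toList hrefl htrans (hCchain i)
    have hch0 : (s :: (L ++ [t])).Chain' (Relation.ReflTransGen E) := by
      refine List.isChain_cons.2 ⟨fun y _ => hreach_s y, ?_⟩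
      refine List.isChain_append.2 ⟨hLch, by simp, ?_⟩
      intro u _ v hv
      simp only [List.head?_cons, Option.mem_def, Option.some.injEq] at hv
      subst hv
      exact hreach_t u
    obtain ⟨l, hlch, hlhd, hllast, hlmem⟩ := chainRTG_to_walk (s :: (L ++ [t])) (by simp) hch0
    have hlhd' : l.head? = some s := by rw [hlhd]; rfl
    have hllast' : l.getLast? = some t := by
      rw [hllast]; exact List.getLast?_concat (l := s :: L)
    refine ⟨l, ⟨⟨?_, hlch⟩, hlhd', hllast'⟩, ?_⟩
    · intro h
      rw [h] at hlhd'
      simp at hlhd'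
    · intro x hx
      exact hlmem x (List.mem_cons.2 (Or.inr (List.mem_append.2 (Or.inl ((hLmem x).2 hx)))))
  choose P hPst hPmem using hpath
  have hkInf : k ∈ {n : ℕ | ∃ p : Fin n → List V,
      (∀ i, IsSTWalk E s t (p i)) ∧ (∀ v : V, ∃ i, v ∈ p i)} :=
    ⟨P, hPst, fun v => by
      obtain ⟨i, hi⟩ := hCcov v (Finset.mem_univ v)
      exact ⟨i, hPmem i v hi⟩⟩
  have hkSup : k ∈ {n : ℕ | ∃ I : Finset V, I.card = n ∧
      ∀ u ∈ I, ∀ v ∈ I, u ≠ v → ¬ Relation.ReflTransGen E u v} :=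
    ⟨A, hAcard, fun u hu v hv hne => hAanti u hu v hv hne⟩
  have hBdd : BddAbove {n : ℕ | ∃ I : Finset V, I.card = n ∧
      ∀ u ∈ I, ∀ v ∈ I, u ≠ v → ¬ Relation.ReflTransGen E u v} := by
    refine ⟨Fintype.card V, fun n hn => ?_⟩
    obtain ⟨I, hc, _⟩ := hn
    exact hc ▸ (Finset.card_le_univ I).trans_eq (Finset.card_univ)
  have hle : ∀ nI ∈ {n : ℕ | ∃ I : Finset V, I.card = n ∧
        ∀ u ∈ I, ∀ v ∈ I, u ≠ v → ¬ Relation.ReflTransGen E u v},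
      ∀ nP ∈ {n : ℕ | ∃ p : Fin n → List V,
        (∀ i, IsSTWalk E s t (p i)) ∧ (∀ v : V, ∃ i, v ∈ p i)}, nI ≤ nP := by
    rintro nI ⟨I, hIcard, hIanti⟩ nP ⟨p, hpst, hpcov⟩
    choose f hf using hpcov
    have hinj : Set.InjOn f I := by
      intro u hu v hv hfe
      rcases chain'_comparable (p (f u)) (hpst (f u)).1.2 u v (hf u) (hfe ▸ hf v) with h | h
      · by_contra hne
        exact hIanti u hu v hv hne h
      · by_contra hne
        exact hIanti v hv u hu (Ne.symm hne) h
    calc nI = I.card := hIcard.symm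
      _ ≤ (Finset.univ : Finset (Fin nP)).card :=
          Finset.card_le_card_of_injOn f (fun a _ => Finset.mem_univ _) hinj
      _ = nP := by simp
  apply le_antisymm
  · exact csSup_le ⟨0, ∅, by simp, by simp⟩
      (fun nI hnI => le_csInf ⟨k, hkInf⟩ (fun nP hnP => hle nI hnI nP hnP))
  · exact le_trans (Nat.sInf_le hkInf) (le_csSup hBdd hkSup)
end
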